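/- Let U and V be finite-dimensional real vector spaces, φ : U → V a linear map with dual map φ* : V* → U*, and L ⊆ U ⊕ U* a lagrangian subspace (with respect to the pairing ⟨(X,α),(Y,β)⟩ = β(X) + α(Y)). Then the forward image φ_!L := {(φ(u), β) : u ∈ U, β ∈ V*, (u, φ*(β)) ∈ L} is a lagrangian subspace of V ⊕ V*. -/

import Mathlib

/-- The canonical symmetric pairing on the generalized tangent space `W ⊕ W*`:
`⟨(X,α),(Y,β)⟩ = β(X) + α(Y)`. -/
def gpair {W : Type*} [AddCommGroup W] [Module ℝ W]
    (e e' : W × Module.Dual ℝ W) : ℝ :=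
  e'.2 e.1 + e.2 e'.1

/-- A subset of `W ⊕ W*` is lagrangian if it equals its own orthogonal complement
with respect to the canonical symmetric pairing. -/
def IsLagrangian {W : Type*} [AddCommGroup W] [Module ℝ W]
    (S : Set (W × Module.Dual ℝ W)) : Prop :=
  ∀ e : W × Module.Dual ℝ W, e ∈ S ↔ ∀ e' ∈ S, gpair e e' = 0

/-- The forward image `φ_!L = {(φ(u), β) : (u, φ*(β)) ∈ L}` of a lagrangian subspace
`L ⊆ U ⊕ U*` under a linear map `φ : U → V`. -/
def forwardImage {U V : Type*} [AddCommGroup U] [Module ℝ U] [AddCommGroup V]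
    [Module ℝ V] (φ : U →ₗ[ℝ] V) (L : Set (U × Module.Dual ℝ U)) :
    Set (V × Module.Dual ℝ V) :=
  {e | ∃ (u : U) (β : Module.Dual ℝ V), (u, φ.dualMap β) ∈ L ∧ e = (φ u, β)}

open Module LinearMap Submodule

section gform

variable (W : Type*) [AddCommGroup W] [Module ℝ W]

/-- The pairing as a bilinear form. -/
def gform : LinearMap.BilinForm ℝ (W × Module.Dual ℝ W) :=
  LinearMap.mk₂ ℝ (fun x y => y.2 x.1 + x.2 y.1)
    (fun x x' y => by simp; ring)
    (fun c x y => by simp; ring)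
    (fun x y y' => by simp; ring)
    (fun c x y => by simp; ring)

variable {W}

lemma gform_apply (x y : W × Module.Dual ℝ W) : gform W x y = y.2 x.1 + x.2 y.1 := rfl

lemma gpair_eq_gform (x y : W × Module.Dual ℝ W) : gpair x y = gform W x y := rfl

lemma gform_comm (x y : W × Module.Dual ℝ W) : gform W x y = gform W y x := by
  simp only [gform_apply]; ring

lemma gform_isRefl : (gform W).IsRefl := fun x y h => by rwa [gform_comm]

lemma mem_gorth_iff {N : Submodule ℝ (W × Module.Dual ℝ W)} {e : W × Module.Dual ℝ W} :
    e ∈ (gform W).orthogonal N ↔ ∀ e' ∈ N, gpair e e' = 0 := by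
  rw [LinearMap.BilinForm.mem_orthogonal_iff]
  refine forall₂_congr fun e' he' => ?_
  rw [gpair_eq_gform, gform_comm]

lemma isLagrangian_iff (N : Submodule ℝ (W × Module.Dual ℝ W)) :
    IsLagrangian (N : Set (W × Module.Dual ℝ W)) ↔ (gform W).orthogonal N = N := by
  constructor
  · intro h
    ext e
    rw [mem_gorth_iff]
    exact (h e).symm
  · intro h e
    conv_lhs => rw [SetLike.mem_coe, ← h]
    rw [mem_gorth_iff]
    exact Iff.rfl

variable [FiniteDimensional ℝ W]

lemma gform_nondegenerate : (gform W).Nondegenerate := by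
  refine (gform_isRefl (W := W)).nondegenerate_iff_separatingLeft.2 ?_
  intro x hx
  have h1 : x.1 = 0 := by
    rw [← Module.forall_dual_apply_eq_zero_iff ℝ x.1]
    intro β
    simpa [gform_apply] using hx (0, β)
  have h2 : x.2 = 0 := by
    ext u
    simpa [gform_apply] using hx (u, 0)
  exact Prod.ext h1 h2

lemma gdim : finrank ℝ (W × Module.Dual ℝ W) = 2 * finrank ℝ W := by
  rw [Module.finrank_prod, Subspace.dual_finrank_eq]; ring

lemma lag_finrank {N : Submodule ℝ (W × Module.Dual ℝ W)}
    (hN : IsLagrangian (N : Set (W × Module.Dual ℝ W))) : finrank ℝ N = finrank ℝ W := by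
  have horth := (isLagrangian_iff N).1 hN
  have h := LinearMap.BilinForm.finrank_add_finrank_orthogonal (B := gform W) gform_isRefl N
  rw [LinearMap.BilinForm.orthogonal_top_eq_bot gform_nondegenerate, inf_bot_eq, finrank_bot,
    add_zero, horth, gdim] at h
  omega

lemma isLagrangian_of_isotropic {N : Submodule ℝ (W × Module.Dual ℝ W)}
    (hiso : ∀ e ∈ N, ∀ e' ∈ N, gform W e e' = 0) (hdim : finrank ℝ W ≤ finrank ℝ N) :
    IsLagrangian (N : Set (W × Module.Dual ℝ W)) := by
  rw [isLagrangian_iff]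
  have hle : N ≤ (gform W).orthogonal N := fun e he =>
    LinearMap.BilinForm.mem_orthogonal_iff.2 fun n hn => hiso n hn e he
  have h1 := LinearMap.BilinForm.finrank_orthogonal (B := gform W)
    gform_nondegenerate N
  have h2 : finrank ℝ N ≤ finrank ℝ (W × Module.Dual ℝ W) := Submodule.finrank_le N
  rw [gdim] at h1 h2
  exact (Submodule.eq_of_le_of_finrank_le hle (by omega)).symm

omit [FiniteDimensional ℝ W] in
lemma gorth_sup (N P : Submodule ℝ (W × Module.Dual ℝ W)) :
    (gform W).orthogonal (N ⊔ P) = (gform W).orthogonal N ⊓ (gform W).orthogonal P := by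
  ext m
  simp only [Submodule.mem_inf, LinearMap.BilinForm.mem_orthogonal_iff]
  constructor
  · intro h
    exact ⟨fun n hn => h n (Submodule.mem_sup_left hn),
      fun n hn => h n (Submodule.mem_sup_right hn)⟩
  · rintro ⟨h1, h2⟩ n hn
    rcases Submodule.mem_sup.1 hn with ⟨a, ha, b, hb, rfl⟩
    have := h1 a ha
    have := h2 b hb
    simp only [LinearMap.BilinForm.isOrtho_def, map_add, LinearMap.add_apply] at *
    rw [‹(gform W) a m = 0›, ‹(gform W) b m = 0›, add_zero]

end gform

/-- A lagrangian subset is a submodule. -/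
def IsLagrangian.submodule {W : Type*} [AddCommGroup W] [Module ℝ W]
    {S : Set (W × Module.Dual ℝ W)} (hS : IsLagrangian S) :
    Submodule ℝ (W × Module.Dual ℝ W) where
  carrier := S
  zero_mem' := (hS 0).2 fun e' _ => by simp [gpair]
  add_mem' := fun {a b} ha hb => (hS (a + b)).2 fun e' he' => by
    have h1 := (hS a).1 ha e' he'
    have h2 := (hS b).1 hb e' he'
    simp only [gpair, Prod.fst_add, Prod.snd_add, map_add, LinearMap.add_apply] at *
    linarith
  smul_mem' := fun c {a} ha => (hS (c • a)).2 fun e' he' => by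
    have h1 := (hS a).1 ha e' he'
    simp only [gpair, Prod.smul_fst, Prod.smul_snd, map_smul, LinearMap.smul_apply,
      smul_eq_mul] at *
    linear_combination c * h1

lemma finrank_map_add_finrank_inf_ker {M N : Type*} [AddCommGroup M] [Module ℝ M]
    [AddCommGroup N] [Module ℝ N] [FiniteDimensional ℝ M]
    (f : M →ₗ[ℝ] N) (p : Submodule ℝ M) :
    Module.finrank ℝ (p.map f) + Module.finrank ℝ (p ⊓ LinearMap.ker f : Submodule ℝ M)
      = Module.finrank ℝ p := by
  have h := LinearMap.finrank_range_add_finrank_ker (f.comp p.subtype)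
  rw [LinearMap.range_comp, Submodule.range_subtype, LinearMap.ker_comp,
    ← Submodule.finrank_map_subtype_eq p (Submodule.comap p.subtype (LinearMap.ker f)),
    Submodule.map_comap_subtype] at h
  exact h

/-- The forward image of a lagrangian subspace `L ⊆ U ⊕ U*` under a linear map
`φ : U → V` is a lagrangian subspace of `V ⊕ V*`. -/
theorem forwardImage_lagrangian {U V : Type*}
    [AddCommGroup U] [Module ℝ U] [FiniteDimensional ℝ U]
    [AddCommGroup V] [Module ℝ V] [FiniteDimensional ℝ V]
    (φ : U →ₗ[ℝ] V) (L : Set (U × Module.Dual ℝ U)) (hL : IsLagrangian L) :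
    IsLagrangian (forwardImage φ L) := by
  classical
  set LS : Submodule ℝ (U × Module.Dual ℝ U) := hL.submodule with hLSdef
  have hLS : IsLagrangian (LS : Set (U × Module.Dual ℝ U)) := hL
  set F : (U × Module.Dual ℝ V) →ₗ[ℝ] (U × Module.Dual ℝ U) :=
    (LinearMap.id : U →ₗ[ℝ] U).prodMap φ.dualMap with hF
  set Ψ : (U × Module.Dual ℝ V) →ₗ[ℝ] (V × Module.Dual ℝ V) :=
    φ.prodMap (LinearMap.id : Module.Dual ℝ V →ₗ[ℝ] Module.Dual ℝ V) with hΨ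
  set K : Submodule ℝ (U × Module.Dual ℝ V) := LS.comap F with hK
  set S : Submodule ℝ (V × Module.Dual ℝ V) := K.map Ψ with hS
  -- the forward image is the underlying set of S
  have hset : (S : Set (V × Module.Dual ℝ V)) = forwardImage φ L := by
    ext e
    simp only [hS, hK, forwardImage, Set.mem_setOf_eq, SetLike.mem_coe, Submodule.mem_map,
      Submodule.mem_comap, hF, hΨ, LinearMap.prodMap_apply, LinearMap.id_apply]
    constructor
    · rintro ⟨⟨u, β⟩, hm, rfl⟩
      exact ⟨u, β, hm, rfl⟩
    · rintro ⟨u, β, hm, rfl⟩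
      exact ⟨(u, β), hm, rfl⟩
  rw [← hset]
  -- isotropy
  have hiso : ∀ e ∈ S, ∀ e' ∈ S, gform V e e' = 0 := by
    rintro e ⟨⟨u, β⟩, hm, rfl⟩ e' ⟨⟨u', β'⟩, hm', rfl⟩
    have h := (hL _).1 ((Submodule.mem_comap).1 hm) _ ((Submodule.mem_comap).1 hm')
    simpa [gpair, gform_apply, hF, hΨ, LinearMap.prodMap_apply] using h
  -- notation for dimensions
  have hLdim : Module.finrank ℝ LS = Module.finrank ℝ U := lag_finrank hLS
  -- kernels and ranges
  have hkerF : LinearMap.ker F =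
      (Submodule.map (LinearMap.inr ℝ U (Module.Dual ℝ V)) (LinearMap.ker φ.dualMap)) := by
    ext ⟨u, β⟩
    simp [hF, LinearMap.mem_ker, Prod.ext_iff, Submodule.mem_map, eq_comm, and_comm]
  have hkerFdim : Module.finrank ℝ (LinearMap.ker F)
      = Module.finrank ℝ (LinearMap.ker φ.dualMap) := by
    rw [hkerF]
    have := finrank_map_add_finrank_inf_ker (LinearMap.inr ℝ U (Module.Dual ℝ V))
      (LinearMap.ker φ.dualMap)
    rw [Submodule.ker_inr, inf_bot_eq, finrank_bot, add_zero] at this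
    exact this
  have hdualker : Module.finrank ℝ (LinearMap.ker φ.dualMap)
      + Module.finrank ℝ (LinearMap.range φ) = Module.finrank ℝ V := by
    have h1 := LinearMap.finrank_range_add_finrank_ker φ.dualMap
    rw [LinearMap.finrank_range_dualMap_eq_finrank_range, Subspace.dual_finrank_eq] at h1
    omega
  -- the orthogonal of range F
  have horthF : (gform U).orthogonal (LinearMap.range F)
      = (gform U).orthogonal (LinearMap.range F) := rfl
  have hmem_orthF : ∀ m : U × Module.Dual ℝ U,
      m ∈ (gform U).orthogonal (LinearMap.range F) ↔ (φ m.1 = 0 ∧ m.2 = 0) := by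
    intro m
    rw [LinearMap.BilinForm.mem_orthogonal_iff]
    constructor
    · intro h
      constructor
      · rw [← Module.forall_dual_apply_eq_zero_iff ℝ (φ m.1)]
        intro β
        have := h (F (0, β)) ⟨(0, β), rfl⟩
        simpa [hF, gform_apply, LinearMap.BilinForm.isOrtho_def] using this
      · ext u
        have := h (F (u, 0)) ⟨(u, 0), rfl⟩
        simpa [hF, gform_apply, LinearMap.BilinForm.isOrtho_def] using this
    · rintro ⟨h1, h2⟩ n ⟨⟨u, β⟩, rfl⟩
      simp [hF, gform_apply, LinearMap.BilinForm.isOrtho_def, h2, h1]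
  -- rank-nullity for F
  have hFrank : Module.finrank ℝ (LinearMap.range F) + Module.finrank ℝ (LinearMap.ker F)
      = Module.finrank ℝ U + Module.finrank ℝ V := by
    have := LinearMap.finrank_range_add_finrank_ker F
    rwa [Module.finrank_prod, Subspace.dual_finrank_eq] at this
  -- dimension of the sup
  set d : ℕ := Module.finrank ℝ
    (((gform U).orthogonal (LinearMap.range F)) ⊓ LS : Submodule ℝ (U × Module.Dual ℝ U))
    with hd
  have hsup : Module.finrank ℝ (LinearMap.range F ⊔ LS : Submodule ℝ (U × Module.Dual ℝ U)) + d
      = 2 * Module.finrank ℝ U := by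
    have h1 := LinearMap.BilinForm.finrank_add_finrank_orthogonal (B := gform U)
      gform_isRefl (LinearMap.range F ⊔ LS)
    rw [LinearMap.BilinForm.orthogonal_top_eq_bot gform_nondegenerate, inf_bot_eq, finrank_bot,
      add_zero, gdim, gorth_sup] at h1
    rw [((isLagrangian_iff LS).1 hLS)] at h1
    have h2 : Module.finrank ℝ (LinearMap.range F ⊔ LS : Submodule ℝ (U × Module.Dual ℝ U))
        ≤ 2 * Module.finrank ℝ U := by
      have := Submodule.finrank_le (LinearMap.range F ⊔ LS)
      rwa [gdim] at this
    omega
  have hinf : Module.finrank ℝ (LinearMap.range F ⊓ LS : Submodule ℝ (U × Module.Dual ℝ U))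
      = Module.finrank ℝ (LinearMap.range φ) + d := by
    have h1 := Submodule.finrank_sup_add_finrank_inf_eq (LinearMap.range F) LS
    omega
  -- dimension of K
  have hKdim : Module.finrank ℝ K = Module.finrank ℝ V + d := by
    have h1 := finrank_map_add_finrank_inf_ker F K
    have hmapK : Submodule.map F K = LinearMap.range F ⊓ LS := by
      rw [hK, Submodule.map_comap_eq]
    have h2 : K ⊓ LinearMap.ker F = LinearMap.ker F :=
      inf_eq_right.2 (by rw [hK]; exact LinearMap.ker_le_comap F)
    rw [hmapK, h2] at h1
    omega
  -- D := K ⊓ ker Ψ has dimension d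
  have hDdim : Module.finrank ℝ (K ⊓ LinearMap.ker Ψ : Submodule ℝ (U × Module.Dual ℝ V)) = d := by
    have h1 := finrank_map_add_finrank_inf_ker F (K ⊓ LinearMap.ker Ψ)
    have hmap : Submodule.map F (K ⊓ LinearMap.ker Ψ)
        = ((gform U).orthogonal (LinearMap.range F)) ⊓ LS := by
      ext m
      simp only [Submodule.mem_map, Submodule.mem_inf, hmem_orthF]
      constructor
      · rintro ⟨⟨u, β⟩, ⟨hKm, hkerm⟩, rfl⟩
        have hβ : β = 0 := by
          have := hkerm
          simp only [hΨ, LinearMap.mem_ker, LinearMap.prodMap_apply, LinearMap.id_apply,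
            Prod.ext_iff] at this
          exact this.2
        have hφu : φ u = 0 := by
          have := hkerm
          simp only [hΨ, LinearMap.mem_ker, LinearMap.prodMap_apply, LinearMap.id_apply,
            Prod.ext_iff] at this
          exact this.1
        refine ⟨⟨?_, ?_⟩, ?_⟩
        · simpa [hF] using hφu
        · simp [hF, hβ]
        · exact (Submodule.mem_comap).1 hKm
      · rintro ⟨⟨hφ1, h2⟩, hmLS⟩
        refine ⟨(m.1, 0), ⟨?_, ?_⟩, ?_⟩
        · rw [Submodule.mem_comap]
          have : F (m.1, 0) = m := by
            simp [hF, Prod.ext_iff]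
            simpa [hF] using h2.symm
          rw [this]; exact hmLS
        · simp only [hΨ, LinearMap.mem_ker, LinearMap.prodMap_apply, LinearMap.id_apply,
            Prod.ext_iff]
          exact ⟨by simpa [hF] using hφ1, rfl⟩
        · simp [hF, Prod.ext_iff]
          simpa [hF] using h2.symm
    have hbot : (K ⊓ LinearMap.ker Ψ) ⊓ LinearMap.ker F = ⊥ := by
      rw [eq_bot_iff]
      rintro ⟨u, β⟩ hm
      simp only [Submodule.mem_inf, LinearMap.mem_ker, hΨ, hF, LinearMap.prodMap_apply,
        LinearMap.id_apply, Prod.mk_eq_zero] at hm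
      simp only [Submodule.mem_bot, Prod.mk_eq_zero]
      exact ⟨hm.2.1, hm.1.2.2⟩
    rw [hmap, hbot, finrank_bot, add_zero] at h1
    exact h1.symm
  -- dimension of S
  have hSdim : Module.finrank ℝ S = Module.finrank ℝ V := by
    have h1 := finrank_map_add_finrank_inf_ker Ψ K
    rw [← hS] at h1
    omega
  exact isLagrangian_of_isotropic hiso (le_of_eq hSdim.symm)
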